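/- If f : Fin n → Fin n is chosen uniformly at random, the probability that f has a unique cyclic vertex is 1/n. -/

import Mathlib

set_option linter.unusedSectionVars false
set_option linter.deprecated false

namespace PUC
open Function List

variable {n : ℕ}

def cyc (f : Fin n → Fin n) (x : Fin n) : Prop := ∃ k, 1 ≤ k ∧ f^[k] x = x

open scoped Classical in
noncomputable def cset (f : Fin n → Fin n) : Finset (Fin n) :=
  Finset.univ.filter fun x => cyc f x

lemma mem_cset {f : Fin n → Fin n} {x : Fin n} : x ∈ cset f ↔ cyc f x := by
  classical simp [cset]

lemma cyc_iterate {f : Fin n → Fin n} {x : Fin n} (h : cyc f x) (m : ℕ) :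
    cyc f (f^[m] x) := by
  obtain ⟨k, hk1, hk⟩ := h
  refine ⟨k, hk1, ?_⟩
  rw [← Function.iterate_add_apply, Nat.add_comm, Function.iterate_add_apply, hk]

lemma exists_iterate_cyc [NeZero n] (f : Fin n → Fin n) (x : Fin n) :
    ∃ m, f^[m] x ∈ cset f := by
  have hcard : Fintype.card (Fin n) < Fintype.card (Fin (n+1)) := by simp
  obtain ⟨i, j, hne, heq⟩ :=
    Fintype.exists_ne_map_eq_of_card_lt (fun i : Fin (n+1) => f^[(i : ℕ)] x) hcard
  rcases hne.lt_or_gt with h | h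
  · refine ⟨i, mem_cset.2 ⟨j - i, by omega, ?_⟩⟩
    rw [← Function.iterate_add_apply]
    rw [Nat.sub_add_cancel h.le, heq]
  · refine ⟨j, mem_cset.2 ⟨i - j, by omega, ?_⟩⟩
    rw [← Function.iterate_add_apply]
    rw [Nat.sub_add_cancel h.le, heq]

lemma reach_agree {f g : Fin n → Fin n} {C : Finset (Fin n)}
    (hag : ∀ x ∉ C, f x = g x) {x : Fin n} (h : ∃ m, f^[m] x ∈ C) :
    ∃ m, g^[m] x ∈ C := by
  obtain ⟨m, hm⟩ := h
  induction m generalizing x with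
  | zero => exact ⟨0, hm⟩
  | succ m ih =>
    by_cases hx : x ∈ C
    · exact ⟨0, hx⟩
    · have : f^[m] (f x) ∈ C := by rwa [← Function.iterate_succ_apply]
      obtain ⟨m', hm'⟩ := ih this
      exact ⟨m' + 1, by rw [Function.iterate_succ_apply, ← hag x hx]; exact hm'⟩

lemma cyc_of_mem_stable [NeZero n] {f : Fin n → Fin n} {C : Finset (Fin n)}
    (hst : ∀ x ∈ C, f x ∈ C) (hinj : Set.InjOn f C) {x : Fin n} (hx : x ∈ C) :
    cyc f x := by
  have hiter : ∀ m, f^[m] x ∈ C := by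
    intro m; induction m with
    | zero => exact hx
    | succ m ih => rw [Function.iterate_succ_apply']; exact hst _ ih
  have hcard : Fintype.card (Fin n) < Fintype.card (Fin (n+1)) := by simp
  obtain ⟨i, j, hne, heq⟩ :=
    Fintype.exists_ne_map_eq_of_card_lt (fun i : Fin (n+1) => f^[(i : ℕ)] x) hcard
  -- cancellation
  have cancel : ∀ i d : ℕ, f^[i] x = f^[i + d] x → x = f^[d] x := by
    intro i
    induction i with
    | zero => intro d h; simpa using h
    | succ i ih =>
      intro d h
      apply ih
      have h1 : f (f^[i] x) = f (f^[i + d] x) := by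
        rw [← Function.iterate_succ_apply' f i x, ← Function.iterate_succ_apply' f (i + d) x]
        rw [h]; congr 1; omega
      exact hinj (hiter i) (hiter (i + d)) h1
  rcases hne.lt_or_gt with h | h
  · exact ⟨j - i, by omega, (cancel i (j - i) (by rw [heq]; congr 1; omega)).symm⟩
  · exact ⟨i - j, by omega, (cancel j (i - j) (by rw [← heq]; congr 1; omega)).symm⟩

lemma cset_eq [NeZero n] {f : Fin n → Fin n} {C : Finset (Fin n)}
    (hst : ∀ x ∈ C, f x ∈ C) (hinj : Set.InjOn f C)
    (hreach : ∀ x, ∃ m, f^[m] x ∈ C) : cset f = C := by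
  apply Finset.Subset.antisymm
  · intro x hx
    obtain ⟨p, hp1, hp⟩ := mem_cset.1 hx
    obtain ⟨m₀, hm₀⟩ := hreach x
    have hstay : ∀ s, f^[m₀ + s] x ∈ C := by
      intro s; induction s with
      | zero => exact hm₀
      | succ s ih =>
        rw [show m₀ + (s+1) = (m₀ + s) + 1 by omega, Function.iterate_succ_apply' f (m₀+s) x]
        exact hst _ ih
    have hper : ∀ j : ℕ, f^[p * j] x = x := by
      intro j; induction j with
      | zero => simp
      | succ j ih =>
        have : p * (j + 1) = p * j + p := by ring
        rw [this, Function.iterate_add_apply, hp, ih]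
    have hge : m₀ ≤ p * (m₀ + 1) := by nlinarith
    have := hstay (p * (m₀ + 1) - m₀)
    rw [show m₀ + (p * (m₀ + 1) - m₀) = p * (m₀ + 1) by omega, hper] at this
    exact this
  · intro x hx; exact mem_cset.2 (cyc_of_mem_stable hst hinj hx)


section Main
variable [NeZero n]

noncomputable def eC (f : Fin n → Fin n) (i : ℕ) : Fin n :=
  ((cset f).sort (· ≤ ·)).getD i default

noncomputable def af (f : Fin n → Fin n) (i : ℕ) : Fin n := f (eC f i)

noncomputable def pl (f : Fin n → Fin n) : List (Fin n) :=
  (List.range (cset f).card).map (af f)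

noncomputable def gOf (f : Fin n → Fin n) : Fin n → Fin n := fun x =>
  if x ∈ cset f then af f (min ((pl f).idxOf x + 1) ((cset f).card - 1)) else f x

noncomputable def vOf (f : Fin n → Fin n) : Fin n := af f 0

noncomputable def rt (g : Fin n → Fin n) : Fin n := Classical.epsilon (cyc g)

open scoped Classical in
noncomputable def ht (g : Fin n → Fin n) (v : Fin n) : ℕ :=
  if h : ∃ m, g^[m] v = rt g then Nat.find h else 0

noncomputable def Cgv (g : Fin n → Fin n) (v : Fin n) : Finset (Fin n) :=
  (Finset.range (ht g v + 1)).image (fun i => g^[i] v)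

noncomputable def fOf (g : Fin n → Fin n) (v : Fin n) : Fin n → Fin n := fun x =>
  if x ∈ Cgv g v then g^[((Cgv g v).sort (· ≤ ·)).idxOf x] v else g x

variable (f : Fin n → Fin n)

lemma cset_nonempty : (cset f).Nonempty :=
  ⟨_, (exists_iterate_cyc f default).choose_spec⟩

lemma k_pos : 0 < (cset f).card := Finset.card_pos.2 (cset_nonempty f)

lemma length_sort_cset : ((cset f).sort (· ≤ ·)).length = (cset f).card :=
  Finset.length_sort _

variable {f}

lemma eC_mem {i : ℕ} (h : i < (cset f).card) : eC f i ∈ cset f := by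
  have hl : i < ((cset f).sort (· ≤ ·)).length := by rw [length_sort_cset]; exact h
  rw [eC, List.getD_eq_get _ _ ⟨_, hl⟩]
  exact (Finset.mem_sort _).1 (List.get_mem _ _)

lemma indexOf_eC {i : ℕ} (h : i < (cset f).card) :
    ((cset f).sort (· ≤ ·)).idxOf (eC f i) = i := by
  have hl : i < ((cset f).sort (· ≤ ·)).length := by rw [length_sort_cset]; exact h
  rw [eC, List.getD_eq_get _ _ ⟨_, hl⟩]
  exact List.get_idxOf ((cset f).sort_nodup _) _

lemma indexOf_lt_card {x : Fin n} (hx : x ∈ cset f) :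
    ((cset f).sort (· ≤ ·)).idxOf x < (cset f).card := by
  rw [← length_sort_cset]
  exact List.idxOf_lt_length_iff.2 ((Finset.mem_sort _).2 hx)

lemma eC_indexOf {x : Fin n} (hx : x ∈ cset f) :
    eC f (((cset f).sort (· ≤ ·)).idxOf x) = x := by
  have hl : ((cset f).sort (· ≤ ·)).idxOf x < ((cset f).sort (· ≤ ·)).length :=
    List.idxOf_lt_length_iff.2 ((Finset.mem_sort _).2 hx)
  rw [eC, List.getD_eq_get _ _ ⟨_, hl⟩]
  exact List.idxOf_get hl

lemma maps_cset {x : Fin n} (hx : x ∈ cset f) : f x ∈ cset f := by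
  have := cyc_iterate (mem_cset.1 hx) 1
  simpa using mem_cset.2 this

lemma injOn_cset : Set.InjOn f (cset f) := by
  intro x hx y hy hxy
  obtain ⟨p, hp1, hp⟩ := mem_cset.1 hx
  obtain ⟨q, hq1, hq⟩ := mem_cset.1 hy
  have hxp : f^[p * q] x = x := by
    rw [Function.iterate_mul]; exact Function.iterate_fixed hp q
  have hyq : f^[p * q] y = y := by
    rw [Nat.mul_comm, Function.iterate_mul]; exact Function.iterate_fixed hq p
  obtain ⟨r, hr⟩ : ∃ r, p * q = r + 1 := ⟨p * q - 1, by have := Nat.mul_pos hp1 hq1; omega⟩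
  rw [hr] at hxp hyq
  calc x = f^[r + 1] x := hxp.symm
    _ = f^[r] (f x) := Function.iterate_succ_apply f r x
    _ = f^[r] (f y) := by rw [hxy]
    _ = f^[r + 1] y := (Function.iterate_succ_apply f r y).symm
    _ = y := hyq

lemma af_mem {i : ℕ} (h : i < (cset f).card) : af f i ∈ cset f :=
  maps_cset (eC_mem h)

lemma af_injOn {i j : ℕ} (hi : i < (cset f).card) (hj : j < (cset f).card)
    (h : af f i = af f j) : i = j := by
  have := injOn_cset (eC_mem hi) (eC_mem hj) h
  rw [← indexOf_eC hi, ← indexOf_eC hj, this]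

lemma af_surj {x : Fin n} (hx : x ∈ cset f) :
    ∃ i < (cset f).card, af f i = x := by
  have himg : Finset.image f (cset f) = cset f := by
    apply Finset.eq_of_subset_of_card_le
    · intro y hy
      obtain ⟨z, hz, rfl⟩ := Finset.mem_image.1 hy
      exact maps_cset hz
    · rw [Finset.card_image_of_injOn injOn_cset]
  rw [← himg] at hx
  obtain ⟨y, hy, rfl⟩ := Finset.mem_image.1 hx
  exact ⟨_, indexOf_lt_card hy, by rw [af, eC_indexOf hy]⟩

lemma length_pl : (pl f).length = (cset f).card := by simp [pl]

lemma nodup_pl : (pl f).Nodup := by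
  refine List.Nodup.map_on ?_ (List.nodup_range)
  intro i hi j hj h
  exact af_injOn (List.mem_range.1 hi) (List.mem_range.1 hj) h

lemma mem_pl {x : Fin n} : x ∈ pl f ↔ x ∈ cset f := by
  simp only [pl, List.mem_map, List.mem_range]
  constructor
  · rintro ⟨i, hi, rfl⟩; exact af_mem hi
  · intro hx; obtain ⟨i, hi, hx'⟩ := af_surj hx; exact ⟨i, hi, hx'⟩

lemma indexOf_pl_af {i : ℕ} (h : i < (cset f).card) :
    (pl f).idxOf (af f i) = i := by
  have hl : i < (pl f).length := by rw [length_pl]; exact h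
  have : (pl f).get ⟨i, hl⟩ = af f i := by
    simp [pl]
  rw [← this]
  exact List.get_idxOf nodup_pl _

lemma gOf_af {i : ℕ} (h : i < (cset f).card) :
    gOf f (af f i) = af f (min (i + 1) ((cset f).card - 1)) := by
  rw [gOf, if_pos (af_mem h), indexOf_pl_af h]

lemma gOf_not_mem {x : Fin n} (hx : x ∉ cset f) : gOf f x = f x := if_neg hx

lemma gOf_iterate (m : ℕ) : ∀ {i : ℕ}, i < (cset f).card →
    (gOf f)^[m] (af f i) = af f (min (i + m) ((cset f).card - 1)) := by
  induction m with
  | zero =>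
    intro i hi
    simp only [Function.iterate_zero, id_eq]
    congr 1
    omega
  | succ m ih =>
    intro i hi
    rw [Function.iterate_succ_apply, gOf_af hi]
    have h2 : min (i + 1) ((cset f).card - 1) < (cset f).card := by
      have := k_pos f; omega
    rw [ih h2]
    congr 1
    have := k_pos f
    omega


lemma cset_gOf : cset (gOf f) = {af f ((cset f).card - 1)} := by
  have hk1 : 0 < (cset f).card := k_pos f
  have hw : (cset f).card - 1 < (cset f).card := by omega
  apply cset_eq
  · intro x hx
    rw [Finset.mem_singleton] at hx; subst hx
    rw [Finset.mem_singleton, gOf_af hw]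
    congr 1; omega
  · intro x hx y hy hxy
    simp only [Finset.coe_singleton, Set.mem_singleton_iff] at hx hy
    rw [hx, hy]
  · intro x
    by_cases hx : x ∈ cset f
    · obtain ⟨i, hi, rfl⟩ := af_surj hx
      refine ⟨(cset f).card, ?_⟩
      rw [gOf_iterate _ hi, Finset.mem_singleton]
      congr 1; omega
    · have h1 : ∃ m, f^[m] x ∈ cset f := exists_iterate_cyc f x
      have h2 : ∃ m, (gOf f)^[m] x ∈ cset f :=
        reach_agree (fun y hy => (gOf_not_mem hy).symm) h1
      obtain ⟨m, hm⟩ := h2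
      obtain ⟨i, hi, hai⟩ := af_surj hm
      refine ⟨(cset f).card + m, ?_⟩
      rw [Function.iterate_add_apply, ← hai, gOf_iterate _ hi, Finset.mem_singleton]
      congr 1; omega

lemma P_gOf : ∃! v : Fin n, ∃ k, 1 ≤ k ∧ (gOf f)^[k] v = v := by
  have h := cset_gOf (f := f)
  refine ⟨af f ((cset f).card - 1), ?_, ?_⟩
  · have : af f ((cset f).card - 1) ∈ cset (gOf f) := by
      rw [h]; exact Finset.mem_singleton_self _
    exact mem_cset.1 this
  · intro y hy
    have : y ∈ cset (gOf f) := mem_cset.2 hy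
    rw [h, Finset.mem_singleton] at this; exact this

lemma rt_gOf : rt (gOf f) = af f ((cset f).card - 1) := by
  have hep : cyc (gOf f) (rt (gOf f)) :=
    Classical.epsilon_spec (P_gOf (f := f)).exists
  have : rt (gOf f) ∈ cset (gOf f) := mem_cset.2 hep
  rw [cset_gOf, Finset.mem_singleton] at this; exact this

lemma gOf_iterate_vOf (m : ℕ) :
    (gOf f)^[m] (vOf f) = af f (min m ((cset f).card - 1)) := by
  have := gOf_iterate (f := f) m (k_pos f)
  simpa [vOf] using this

lemma ht_gOf : ht (gOf f) (vOf f) = (cset f).card - 1 := by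
  have hk := k_pos (f := f)
  have hrt := rt_gOf (f := f)
  have hEx : ∃ m, (gOf f)^[m] (vOf f) = rt (gOf f) :=
    ⟨(cset f).card - 1, by rw [gOf_iterate_vOf, hrt]; congr 1; omega⟩
  rw [ht, dif_pos hEx, Nat.find_eq_iff]
  constructor
  · rw [gOf_iterate_vOf, hrt]; congr 1; omega
  · intro m hm hmeq
    rw [gOf_iterate_vOf, hrt] at hmeq
    have := af_injOn (f := f) (i := min m ((cset f).card - 1))
      (by omega) (by omega) hmeq
    omega

lemma Cgv_gOf : Cgv (gOf f) (vOf f) = cset f := by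
  have hk := k_pos f
  apply Finset.ext; intro x
  simp only [Cgv, Finset.mem_image, Finset.mem_range, ht_gOf]
  constructor
  · rintro ⟨i, hi, rfl⟩
    rw [gOf_iterate_vOf]
    exact af_mem (by omega)
  · intro hx
    obtain ⟨i, hi, rfl⟩ := af_surj hx
    exact ⟨i, by omega, by rw [gOf_iterate_vOf]; congr 1; omega⟩

lemma fOf_gOf : fOf (gOf f) (vOf f) = f := by
  have hk := k_pos f
  funext x
  simp only [fOf, Cgv_gOf]
  by_cases hx : x ∈ cset f
  · rw [if_pos hx, gOf_iterate_vOf]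
    have h1 := indexOf_lt_card hx
    rw [min_eq_left (by omega)]
    conv_rhs => rw [← eC_indexOf hx]
    rfl
  · rw [if_neg hx, gOf_not_mem hx]

-- Φ side
variable {g : Fin n → Fin n} {v : Fin n}

lemma cyc_rt (hg : ∃! w : Fin n, cyc g w) : cyc g (rt g) :=
  Classical.epsilon_spec hg.exists

lemma eq_rt (hg : ∃! w : Fin n, cyc g w) {y : Fin n} (h : cyc g y) : y = rt g :=
  hg.unique h (cyc_rt hg)

lemma exists_hit (hg : ∃! w : Fin n, cyc g w) (x : Fin n) : ∃ m, g^[m] x = rt g := by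
  obtain ⟨m, hm⟩ := exists_iterate_cyc g x
  exact ⟨m, eq_rt hg (mem_cset.1 hm)⟩

lemma ht_spec (hg : ∃! w : Fin n, cyc g w) : g^[ht g v] v = rt g := by
  rw [ht, dif_pos (exists_hit hg v)]; exact Nat.find_spec (exists_hit hg v)

lemma ht_min (hg : ∃! w : Fin n, cyc g w) {i : ℕ} (hi : i < ht g v) :
    g^[i] v ≠ rt g := by
  rw [ht, dif_pos (exists_hit hg v)] at hi; exact Nat.find_min _ hi

lemma g_rt (hg : ∃! w : Fin n, cyc g w) : g (rt g) = rt g := by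
  have h1 : cyc g (g^[1] (rt g)) := cyc_iterate (cyc_rt hg) 1
  have := eq_rt hg h1
  simpa using this

lemma iter_injOn (hg : ∃! w : Fin n, cyc g w) {i j : ℕ}
    (hi : i ≤ ht g v) (hj : j ≤ ht g v) (h : g^[i] v = g^[j] v) : i = j := by
  rcases Nat.lt_trichotomy i j with hij | hij | hij
  · exfalso
    have hc : cyc g (g^[i] v) := ⟨j - i, by omega, by
      rw [← Function.iterate_add_apply, show j - i + i = j by omega, ← h]⟩
    exact ht_min hg (show i < ht g v by omega) (eq_rt hg hc)
  · exact hij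
  · exfalso
    have hc : cyc g (g^[j] v) := ⟨i - j, by omega, by
      rw [← Function.iterate_add_apply, show i - j + j = i by omega, h]⟩
    exact ht_min hg (show j < ht g v by omega) (eq_rt hg hc)

lemma mem_Cgv {x : Fin n} : x ∈ Cgv g v ↔ ∃ i ≤ ht g v, g^[i] v = x := by
  simp [Cgv, Finset.mem_image, Finset.mem_range, Nat.lt_succ_iff]

lemma card_Cgv (hg : ∃! w : Fin n, cyc g w) : (Cgv g v).card = ht g v + 1 := by
  rw [Cgv, Finset.card_image_of_injOn, Finset.card_range]
  intro i hi j hj h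
  simp only [Finset.coe_range, Set.mem_Iio] at hi hj
  exact iter_injOn hg (by omega) (by omega) h

lemma fOf_not_mem {x : Fin n} (hx : x ∉ Cgv g v) : fOf g v x = g x := if_neg hx

lemma fOf_mem {x : Fin n} (hx : x ∈ Cgv g v) :
    fOf g v x = g^[((Cgv g v).sort (· ≤ ·)).idxOf x] v := by
  simp only [fOf, if_pos hx]

lemma indexOf_le_ht (hg : ∃! w : Fin n, cyc g w) {x : Fin n} (hx : x ∈ Cgv g v) :
    ((Cgv g v).sort (· ≤ ·)).idxOf x ≤ ht g v := by
  have h1 : ((Cgv g v).sort (· ≤ ·)).idxOf x < ((Cgv g v).sort (· ≤ ·)).length :=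
    List.idxOf_lt_length_iff.2 ((Finset.mem_sort _).2 hx)
  rw [Finset.length_sort, card_Cgv hg] at h1
  omega

lemma cset_fOf (hg : ∃! w : Fin n, cyc g w) : cset (fOf g v) = Cgv g v := by
  apply cset_eq
  · intro x hx
    rw [fOf_mem hx]
    exact mem_Cgv.2 ⟨_, indexOf_le_ht hg hx, rfl⟩
  · intro x hx y hy h
    rw [Finset.mem_coe] at hx hy
    rw [fOf_mem hx, fOf_mem hy] at h
    have := iter_injOn hg (indexOf_le_ht hg hx) (indexOf_le_ht hg hy) h
    exact (List.idxOf_inj ((Finset.mem_sort _).2 hx)).1 this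
  · intro x
    have h1 : ∃ m, g^[m] x ∈ Cgv g v := by
      obtain ⟨m, hm⟩ := exists_hit hg x
      exact ⟨m, by rw [hm]; exact mem_Cgv.2 ⟨ht g v, le_refl _, ht_spec hg⟩⟩
    exact reach_agree (fun y hy => (fOf_not_mem hy).symm) h1

lemma af_fOf (hg : ∃! w : Fin n, cyc g w) {i : ℕ} (hi : i ≤ ht g v) :
    af (fOf g v) i = g^[i] v := by
  have hA := cset_fOf (v := v) hg
  have hk : (cset (fOf g v)).card = ht g v + 1 := by rw [hA, card_Cgv hg]
  have hi' : i < (cset (fOf g v)).card := by omega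
  have h1 : eC (fOf g v) i ∈ Cgv g v := by rw [← hA]; exact eC_mem hi'
  rw [af, fOf_mem h1]
  congr 1
  have h2 := indexOf_eC hi'
  rw [hA] at h2
  exact h2

lemma gOf_fOf (hg : ∃! w : Fin n, cyc g w) :
    gOf (fOf g v) = g ∧ vOf (fOf g v) = v := by
  have hA := cset_fOf (v := v) hg
  have hk : (cset (fOf g v)).card = ht g v + 1 := by rw [hA, card_Cgv hg]
  have hv : vOf (fOf g v) = v := by
    rw [vOf, af_fOf hg (Nat.zero_le _)]; simp
  refine ⟨?_, hv⟩
  funext x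
  by_cases hx : x ∈ Cgv g v
  · obtain ⟨i, hi, rfl⟩ := mem_Cgv.1 hx
    have hgx : gOf (fOf g v) (g^[i] v) = af (fOf g v) (min (i + 1) (ht g v)) := by
      conv_lhs => rw [← af_fOf hg hi]
      rw [gOf_af (show i < (cset (fOf g v)).card by omega)]
      congr 1; omega
    rw [hgx]
    rcases Nat.lt_or_ge i (ht g v) with h | h
    · rw [min_eq_left (by omega), af_fOf hg (by omega)]
      rw [Function.iterate_succ_apply']
    · have hit : i = ht g v := by omega
      subst hit
      rw [min_eq_right (by omega), af_fOf hg le_rfl]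
      rw [ht_spec hg, g_rt hg]
  · have hx' : x ∉ cset (fOf g v) := by rw [hA]; exact hx
    rw [gOf_not_mem hx', fOf_not_mem hx]

end Main

noncomputable def mainEquiv (n : ℕ) [NeZero n] :
    ({g : Fin n → Fin n // ∃! v : Fin n, ∃ k, 1 ≤ k ∧ g^[k] v = v} × Fin n) ≃
      (Fin n → Fin n) where
  toFun p := fOf p.1.1 p.2
  invFun f := (⟨gOf f, P_gOf⟩, vOf f)
  left_inv p := by
    obtain ⟨⟨g, hg⟩, v⟩ := p
    obtain ⟨h1, h2⟩ := gOf_fOf (g := g) (v := v) hg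
    simp only [Prod.mk.injEq, Subtype.mk.injEq]
    exact ⟨h1, h2⟩
  right_inv f := fOf_gOf

end PUC

theorem prob_unique_cyclic_vertex (n : ℕ) (hn : 1 ≤ n) :
    (Nat.card {f : Fin n → Fin n // ∃! v : Fin n, ∃ k, 1 ≤ k ∧ f^[k] v = v} : ℚ)
      / (Nat.card (Fin n → Fin n) : ℚ) = 1 / n := by
  haveI : NeZero n := ⟨by omega⟩
  have hcard : Nat.card {f : Fin n → Fin n // ∃! v : Fin n, ∃ k, 1 ≤ k ∧ f^[k] v = v} * n
      = n ^ n := by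
    have h := Nat.card_congr (PUC.mainEquiv n)
    rw [Nat.card_prod] at h
    simpa [Nat.card_eq_fintype_card] using h
  have h2 : Nat.card (Fin n → Fin n) = n ^ n := by
    simp [Nat.card_eq_fintype_card]
  rw [h2]
  have hn0 : (n : ℚ) ≠ 0 := Nat.cast_ne_zero.2 (by omega)
  have hnn : ((n : ℚ)) ^ n ≠ 0 := pow_ne_zero _ hn0
  rw [div_eq_div_iff (by push_cast at hnn ⊢; exact hnn) hn0]
  push_cast
  rw [one_mul]
  exact_mod_cast hcard
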